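/- Let a > 0 and let f, g : [-a,a] → ℝ be odd continuous functions. If x : [-a,a] → ℝ is a continuous even function, then Ω(x) is an even function on [-a,a], i.e., Ω(x)(−t) = Ω(x)(t) for all t ∈ [-a,a]. -/

import Mathlib

/-- The operator `Ω` associated to the Abel equation: `Ω(x)(t) = ρ / (1 - ρ ∫_{-a}^t (f x + g))`. -/
noncomputable def Omega (a ρ : ℝ) (f g x : ℝ → ℝ) : ℝ → ℝ :=
  fun t => ρ / (1 - ρ * ∫ s in (-a)..t, (f s * x s + g s))

/-- If `f, g` are odd continuous functions on `[-a,a]` and `x` is a continuous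
even function on `[-a,a]`, then `Ω(x)` is even on `[-a,a]`. -/
theorem omega_preserves_evenness
    (a ρ : ℝ) (ha : 0 < a) (f g : ℝ → ℝ)
    (hf : ContinuousOn f (Set.Icc (-a) a)) (hg : ContinuousOn g (Set.Icc (-a) a))
    (hfodd : ∀ t ∈ Set.Icc (-a) a, f (-t) = -f t)
    (hgodd : ∀ t ∈ Set.Icc (-a) a, g (-t) = -g t)
    (x : ℝ → ℝ) (hx : ContinuousOn x (Set.Icc (-a) a))
    (hxeven : ∀ t ∈ Set.Icc (-a) a, x (-t) = x t) :
    ∀ t ∈ Set.Icc (-a) a, Omega a ρ f g x (-t) = Omega a ρ f g x t := by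
  set F : ℝ → ℝ := fun s => f s * x s + g s with hF
  have hFcont : ContinuousOn F (Set.Icc (-a) a) := ((hf.mul hx).add hg)
  have hFodd : ∀ s ∈ Set.Icc (-a) a, F (-s) = -F s := by
    intro s hs
    simp only [hF, hfodd s hs, hgodd s hs, hxeven s hs]
    ring
  have haa : (-a : ℝ) ≤ a := by linarith
  have hInt : ∀ u v : ℝ, u ∈ Set.Icc (-a) a → v ∈ Set.Icc (-a) a →
      IntervalIntegrable F MeasureTheory.volume u v := by
    intro u v hu hv
    exact (hFcont.mono (Set.uIcc_subset_Icc hu hv)).intervalIntegrable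
  have hends : (-a : ℝ) ∈ Set.Icc (-a) a ∧ a ∈ Set.Icc (-a) a := by
    constructor <;> simp [haa]
  -- The integral of F over [-a, a] is zero
  have h0 : (∫ s in (-a)..a, F s) = 0 := by
    have h1 : (∫ s in (-a)..a, F (-s)) = ∫ s in -a..(- -a), F s :=
      intervalIntegral.integral_comp_neg F
    rw [neg_neg] at h1
    have h2 : (∫ s in (-a)..a, F (-s)) = ∫ s in (-a)..a, -F s := by
      apply intervalIntegral.integral_congr
      intro s hs
      rw [Set.uIcc_of_le haa] at hs
      exact hFodd s hs
    rw [intervalIntegral.integral_neg] at h2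
    linarith [h1.symm.trans h2]
  intro t ht
  have hnt : -t ∈ Set.Icc (-a) a := by
    constructor <;> [linarith [ht.2]; linarith [ht.1]]
  have hta : t ≤ a := ht.2
  -- ∫ from -a to -t equals ∫ from -a to t
  have key : (∫ s in (-a)..(-t), F s) = ∫ s in (-a)..t, F s := by
    have h1 : (∫ s in t..a, F (-s)) = ∫ s in -a..(-t), F s := by
      have := intervalIntegral.integral_comp_neg F (a := t) (b := a)
      exact this
    have h2 : (∫ s in t..a, F (-s)) = -∫ s in t..a, F s := by
      rw [← intervalIntegral.integral_neg]
      apply intervalIntegral.integral_congr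
      intro s hs
      rw [Set.uIcc_of_le hta] at hs
      exact hFodd s ⟨le_trans ht.1 hs.1, hs.2⟩
    have h3 : (∫ s in (-a)..t, F s) + ∫ s in t..a, F s = ∫ s in (-a)..a, F s :=
      intervalIntegral.integral_add_adjacent_intervals
        (hInt _ _ hends.1 ht) (hInt _ _ ht hends.2)
    rw [h0] at h3
    rw [← h1, h2]
    linarith
  simp only [Omega]
  exact congrArg (fun I => ρ / (1 - ρ * I)) key
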